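/- Let n ≥ 1, let U = (0,1)^n ⊂ ℝ^n be the open unit cube, and let σ be a Borel measure on U which is finite on compact subsets of U and which is invariant under all translations preserving U in the following sense: for every Borel set A ⊆ U and every v ∈ ℝ^n such that A + v ⊆ U, one has σ(A + v) = σ(A). Then there exists a constant κ ≥ 0 such that σ(A) = κ · Leb(A) for every Borel set A ⊆ U, where Leb denotes Lebesgue measure on ℝ^n. -/

import Mathlib

open MeasureTheory Set

namespace TIMCaux

variable {n : ℕ}

def box (n : ℕ) (a b : Fin n → ℝ) : Set (Fin n → ℝ) :=
  Set.univ.pi fun i => Set.Ioo (a i) (b i)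

lemma measurableSet_box (a b : Fin n → ℝ) : MeasurableSet (box n a b) :=
  MeasurableSet.univ_pi fun _ => measurableSet_Ioo

lemma mem_box {a b : Fin n → ℝ} {x : Fin n → ℝ} :
    x ∈ box n a b ↔ ∀ i, a i < x i ∧ x i < b i := by
  simp [box, Set.mem_univ_pi]

lemma pi_image_add (s : Fin n → Set ℝ) (v : Fin n → ℝ) :
    (fun x => x + v) '' Set.univ.pi s = Set.univ.pi fun i => (fun t => t + v i) '' s i := by
  ext x
  constructor
  · rintro ⟨y, hy, rfl⟩ i _; exact ⟨y i, hy i trivial, rfl⟩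
  · intro hx
    refine ⟨x - v, fun i _ => ?_, by ext i; simp⟩
    obtain ⟨t, ht, htx⟩ := hx i trivial
    dsimp only at htx
    have hxt : x i - v i = t := by linarith
    simpa [Pi.sub_apply, hxt] using ht

lemma box_image (a b v : Fin n → ℝ) :
    (fun x => x + v) '' box n a b = box n (a + v) (b + v) := by
  rw [box, pi_image_add]
  refine congrArg _ (funext fun i => ?_)
  rw [Set.image_add_const_Ioo]
  rfl

lemma aux_mem (m : ℕ) {x : ℝ} (hx : ∀ q : ℚ, x ≠ (q : ℝ)) :
    (⌊x * 2 ^ m⌋ : ℝ) / 2 ^ m < x ∧ x < (⌊x * 2 ^ m⌋ : ℝ) / 2 ^ m + 1 / 2 ^ m := by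
  have h2 : (0 : ℝ) < 2 ^ m := by positivity
  constructor
  · rw [div_lt_iff₀ h2]
    refine lt_of_le_of_ne (Int.floor_le _) fun h => ?_
    refine hx ((⌊x * 2 ^ m⌋ : ℚ) / 2 ^ m) ?_
    push_cast
    rw [eq_div_iff h2.ne']
    exact h.symm
  · rw [← add_div, lt_div_iff₀ h2]
    have := Int.lt_floor_add_one (x * 2 ^ m)
    linarith

lemma aux_nested (m : ℕ) {x : ℝ} {k : ℤ} (h1 : (k : ℝ) / 2 ^ m < x)
    (h2 : x < (k : ℝ) / 2 ^ m + 1 / 2 ^ m) :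
    (k : ℝ) / 2 ^ m ≤ (⌊x * 2 ^ (m + 1)⌋ : ℝ) / 2 ^ (m + 1) ∧
      (⌊x * 2 ^ (m + 1)⌋ : ℝ) / 2 ^ (m + 1) + 1 / 2 ^ (m + 1) ≤ (k : ℝ) / 2 ^ m + 1 / 2 ^ m := by
  have h2m : (0 : ℝ) < 2 ^ m := by positivity
  have h2m1 : (0 : ℝ) < 2 ^ (m + 1) := by positivity
  have hp : (2 : ℝ) ^ (m + 1) = 2 ^ m * 2 := by ring
  have hx1 : (k : ℝ) < x * 2 ^ m := by rwa [div_lt_iff₀ h2m] at h1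
  have hx2 : x * 2 ^ m < (k : ℝ) + 1 := by
    rw [← add_div, lt_div_iff₀ h2m] at h2; linarith
  have hk1 : 2 * k ≤ ⌊x * 2 ^ (m + 1)⌋ := by
    rw [Int.le_floor]; push_cast; rw [hp]; nlinarith
  have hk2 : ⌊x * 2 ^ (m + 1)⌋ ≤ 2 * k + 1 := by
    have : ⌊x * 2 ^ (m + 1)⌋ < 2 * k + 2 := by
      rw [Int.floor_lt]; push_cast; rw [hp]; nlinarith
    omega
  have hK1 : (2 * k : ℝ) ≤ (⌊x * 2 ^ (m + 1)⌋ : ℝ) := by exact_mod_cast hk1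
  have hK2 : (⌊x * 2 ^ (m + 1)⌋ : ℝ) ≤ 2 * k + 1 := by exact_mod_cast hk2
  set K := (⌊x * 2 ^ (m + 1)⌋ : ℝ) with hKdef
  constructor
  · rw [div_le_div_iff₀ h2m h2m1, hp]
    nlinarith [mul_le_mul_of_nonneg_right hK1 h2m.le]
  · rw [← add_div, ← add_div, div_le_div_iff₀ h2m1 h2m, hp]
    nlinarith [mul_le_mul_of_nonneg_right (by linarith : K + 1 ≤ 2 * (k : ℝ) + 2) h2m.le]

lemma aux_small {x a b : ℝ} {m : ℕ}
    (hm1 : 1 / 2 ^ m < x - a) (hm2 : 1 / 2 ^ m < b - x) :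
    a ≤ (⌊x * 2 ^ m⌋ : ℝ) / 2 ^ m ∧ (⌊x * 2 ^ m⌋ : ℝ) / 2 ^ m + 1 / 2 ^ m ≤ b := by
  have h2 : (0 : ℝ) < 2 ^ m := by positivity
  have hfl : (⌊x * 2 ^ m⌋ : ℝ) / 2 ^ m ≤ x := by
    rw [div_le_iff₀ h2]; exact Int.floor_le _
  have hfu : x < (⌊x * 2 ^ m⌋ : ℝ) / 2 ^ m + 1 / 2 ^ m := by
    rw [← add_div, lt_div_iff₀ h2]
    have := Int.lt_floor_add_one (x * 2 ^ m); linarith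
  constructor <;> linarith

def dbox (n m : ℕ) (k : Fin n → ℤ) : Set (Fin n → ℝ) :=
  box n (fun i => (k i : ℝ) / 2 ^ m) (fun i => (k i : ℝ) / 2 ^ m + 1 / 2 ^ m)

lemma measurableSet_dbox (m : ℕ) (k : Fin n → ℤ) : MeasurableSet (dbox n m k) :=
  measurableSet_box _ _

lemma mem_dbox {m : ℕ} {k : Fin n → ℤ} {x : Fin n → ℝ} :
    x ∈ dbox n m k ↔ ∀ i, (k i : ℝ) / 2 ^ m < x i ∧ x i < (k i : ℝ) / 2 ^ m + 1 / 2 ^ m := by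
  simp [dbox, mem_box]

lemma dbox_disjoint {m : ℕ} : Pairwise (Function.onFun Disjoint (dbox n m)) := by
  have key : ∀ k k' : Fin n → ℤ, ∀ i, k i < k' i → ∀ x, x ∈ dbox n m k → x ∉ dbox n m k' := by
    intro k k' i hlt x hx hx'
    have h1 := (mem_dbox.1 hx i).2
    have h2 := (mem_dbox.1 hx' i).1
    have h2m : (0 : ℝ) < 2 ^ m := by positivity
    rw [← add_div] at h1
    have hle : ((k i : ℝ) + 1) / 2 ^ m ≤ (k' i : ℝ) / 2 ^ m := by
      gcongr
      have : (k i : ℝ) + 1 ≤ (k' i : ℝ) := by exact_mod_cast hlt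
      linarith
    linarith
  intro k k' hkk'
  rw [Function.onFun, Set.disjoint_left]
  intro x hx hx'
  obtain ⟨i, hi⟩ : ∃ i, k i ≠ k' i := by
    by_contra h; push_neg at h; exact hkk' (funext h)
  rcases lt_or_gt_of_ne hi with h | h
  · exact key k k' i h x hx hx'
  · exact key k' k i h x hx' hx

lemma volume_dbox (m : ℕ) (k : Fin n → ℤ) :
    volume (dbox n m k) = (ENNReal.ofReal (1 / 2 ^ m)) ^ n := by
  rw [dbox, box, volume_pi_pi]
  simp [Real.volume_Ioo]

end TIMCaux

open TIMCaux in
/-- Let `U = (0,1)^n` be the open unit cube in `ℝ^n` (`n ≥ 1`) and let `σ` be a Borel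
measure which is finite on compact subsets of `U` and invariant under all translations
preserving `U`: `σ(A + v) = σ(A)` whenever `A ⊆ U` is Borel and `A + v ⊆ U`. Then there
is `κ ≥ 0` with `σ(A) = κ · Leb(A)` for every Borel `A ⊆ U`. -/
theorem translation_invariant_measure_on_cube
    (n : ℕ) (hn : 1 ≤ n)
    (U : Set (Fin n → ℝ)) (hU : U = Set.pi Set.univ fun _ => Set.Ioo (0 : ℝ) 1)
    (σ : Measure (Fin n → ℝ))
    (hfin : ∀ K : Set (Fin n → ℝ), K ⊆ U → IsCompact K → σ K < ⊤)
    (hinv : ∀ A : Set (Fin n → ℝ), A ⊆ U → MeasurableSet A →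
      ∀ v : Fin n → ℝ, (fun x => x + v) '' A ⊆ U →
        σ ((fun x => x + v) '' A) = σ A) :
    ∃ κ : NNReal, ∀ A : Set (Fin n → ℝ), A ⊆ U → MeasurableSet A →
      σ A = (κ : ENNReal) * volume A := by
  classical
  -- basic facts
  have hsubU : ∀ a b : Fin n → ℝ, (∀ i, 0 ≤ a i) → (∀ i, b i ≤ 1) → box n a b ⊆ U := by
    intro a b ha hb
    rw [hU]
    exact Set.pi_mono fun i _ => Set.Ioo_subset_Ioo (ha i) (hb i)
  have hvolU : volume U = 1 := by
    rw [hU, volume_pi_pi]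
    simp [Real.volume_Ioo]
  have htrans : ∀ a b v : Fin n → ℝ, box n a b ⊆ U → box n (a + v) (b + v) ⊆ U →
      σ (box n (a + v) (b + v)) = σ (box n a b) := by
    intro a b v h1 h2
    rw [← box_image]
    exact hinv _ h1 (measurableSet_box a b) v (by rw [box_image]; exact h2)
  -- σ U is finite
  have hUfin : σ U < ⊤ := by
    set w : Fin 3 → ℝ := fun j => if j = 0 then -(1/4) else if j = 1 then 0 else 1/4 with hw
    have hwb : ∀ j, -(1/4 : ℝ) ≤ w j ∧ w j ≤ 1/4 := by
      intro j; rw [hw]; dsimp only; split_ifs <;> norm_num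
    have hcover : U ⊆ ⋃ f : Fin n → Fin 3,
        box n (fun i => 1/4 + w (f i)) (fun i => 3/4 + w (f i)) := by
      intro x hx
      rw [hU] at hx
      have hx' : ∀ i, (0 : ℝ) < x i ∧ x i < 1 := fun i => hx i trivial
      refine Set.mem_iUnion.2
        ⟨fun i => if x i < 1/2 then 0 else if x i < 3/4 then 1 else 2, mem_box.2 fun i => ?_⟩
      dsimp only
      split_ifs with h1 h2 <;>
        · simp [hw]
          norm_num
          constructor <;> linarith [(hx' i).1, (hx' i).2]
    have hKfin : σ (Set.univ.pi fun _ : Fin n => Icc (1/4 : ℝ) (3/4)) < ⊤ := by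
      refine hfin _ ?_ (isCompact_univ_pi fun _ => isCompact_Icc)
      rw [hU]
      exact Set.pi_mono fun i _ => Set.Icc_subset_Ioo (by norm_num) (by norm_num)
    have hCle : σ (box n (fun _ => (1/4 : ℝ)) fun _ => 3/4) ≤
        σ (Set.univ.pi fun _ : Fin n => Icc (1/4 : ℝ) (3/4)) :=
      measure_mono (Set.pi_mono fun i _ => Set.Ioo_subset_Icc_self)
    have hboxes : ∀ f : Fin n → Fin 3,
        σ (box n (fun i => 1/4 + w (f i)) fun i => 3/4 + w (f i)) =
          σ (box n (fun _ => (1/4 : ℝ)) fun _ => 3/4) := by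
      intro f
      have h1 : box n (fun _ => (1/4 : ℝ)) (fun _ => 3/4) ⊆ U :=
        hsubU _ _ (fun _ => by norm_num) (fun _ => by norm_num)
      have h2 : box n ((fun _ => (1/4 : ℝ)) + fun i => w (f i))
          ((fun _ => (3/4 : ℝ)) + fun i => w (f i)) ⊆ U := by
        refine hsubU _ _ (fun i => ?_) (fun i => ?_) <;>
          · have := hwb (f i)
            simp only [Pi.add_apply]
            linarith [this.1, this.2]
      have := htrans (fun _ => (1/4 : ℝ)) (fun _ => 3/4) (fun i => w (f i)) h1 h2
      exact this
    calc σ U ≤ σ (⋃ f : Fin n → Fin 3,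
          box n (fun i => 1/4 + w (f i)) (fun i => 3/4 + w (f i))) := measure_mono hcover
      _ ≤ ∑ f : Fin n → Fin 3,
          σ (box n (fun i => 1/4 + w (f i)) (fun i => 3/4 + w (f i))) :=
            measure_iUnion_fintype_le _ _
      _ = ∑ _f : Fin n → Fin 3, σ (box n (fun _ => (1/4 : ℝ)) fun _ => 3/4) := by
            exact Finset.sum_congr rfl fun f _ => hboxes f
      _ < ⊤ := by
            rw [Finset.sum_const, nsmul_eq_mul]
            exact ENNReal.mul_lt_top (ENNReal.natCast_lt_top _) (lt_of_le_of_lt hCle hKfin)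
  -- slices are null
  have hslice : ∀ (i : Fin n) (c : ℝ), σ (U ∩ {x | x i = c}) = 0 := by
    intro i c
    by_cases hc : c ∈ Ioo (0 : ℝ) 1
    · set T : ℝ → Set (Fin n → ℝ) :=
        fun d => Set.univ.pi fun j => if j = i then {d} else Ioo (0 : ℝ) 1 with hTdef
      have hTm : ∀ d, MeasurableSet (T d) := by
        intro d
        refine MeasurableSet.univ_pi fun j => ?_
        split_ifs
        · exact measurableSet_singleton _
        · exact measurableSet_Ioo
      have hTU : ∀ d, d ∈ Ioo (0 : ℝ) 1 → T d ⊆ U := by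
        intro d hd x hx
        rw [hU]
        intro j _
        have hj := hx j trivial
        dsimp only at hj
        by_cases h : j = i
        · rw [if_pos h, mem_singleton_iff] at hj
          rw [hj]; exact hd
        · rwa [if_neg h] at hj
      have hTimage : ∀ d t : ℝ,
          (fun x => x + fun j => if j = i then t else 0) '' T d = T (d + t) := by
        intro d t
        rw [hTdef]
        dsimp only
        rw [pi_image_add]
        refine congrArg _ (funext fun j => ?_)
        by_cases h : j = i
        · simp [h]
        · simp [h]
      have hTeq : ∀ j : ℕ, σ (T (c + (1 - c) / (j + 2))) = σ (T c) := by
        intro j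
        have hj2 : (1 : ℝ) < (j : ℝ) + 2 := by
          have : (0:ℝ) ≤ (j : ℝ) := Nat.cast_nonneg j
          linarith
        have hpos : 0 < (1 - c) / ((j : ℝ) + 2) := by
          apply div_pos (by linarith [hc.2]) (by linarith)
        have hlt : (1 - c) / ((j : ℝ) + 2) < 1 - c :=
          div_lt_self (by linarith [hc.2]) hj2
        rw [← hTimage]
        exact hinv _ (hTU c hc) (hTm c) _
          (by rw [hTimage]; exact hTU _ ⟨by linarith [hc.1], by linarith⟩)
      have hdisj : Pairwise (Function.onFun Disjoint
          (fun j : ℕ => T (c + (1 - c) / (j + 2)))) := by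
        intro j j' hjj'
        rw [Function.onFun, Set.disjoint_left]
        intro x hx hx'
        have h1 : x i = c + (1 - c) / ((j : ℝ) + 2) := by
          have := hx i trivial; simpa using this
        have h2 : x i = c + (1 - c) / ((j' : ℝ) + 2) := by
          have := hx' i trivial; simpa using this
        have h1c : (1 - c) ≠ 0 := by have := hc.2; intro h; linarith
        have heq : (1 - c) / ((j : ℝ) + 2) = (1 - c) / ((j' : ℝ) + 2) := by linarith
        rw [div_eq_div_iff (by positivity) (by positivity)] at heq
        have h3 := mul_left_cancel₀ h1c heq
        have h4 : (j : ℝ) = (j' : ℝ) := by linarith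
        exact hjj' (by exact_mod_cast h4)
      have hUc : U ∩ {x | x i = c} = T c := by
        ext x
        rw [hU]
        constructor
        · rintro ⟨hxU, hxc⟩ j _
          dsimp only
          by_cases h : j = i
          · rw [if_pos h, mem_singleton_iff]
            rw [h]; exact hxc
          · rw [if_neg h]; exact hxU j trivial
        · intro hx
          constructor
          · intro j _
            have hj := hx j trivial
            dsimp only at hj
            by_cases h : j = i
            · rw [if_pos h, mem_singleton_iff] at hj
              rw [hj]; exact hc
            · rwa [if_neg h] at hj
          · have := hx i trivial; simpa using this
      rw [hUc]
      by_contra h0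
      have hsum := measure_iUnion (μ := σ) hdisj (fun j => hTm _)
      have hle : σ (⋃ j : ℕ, T (c + (1 - c) / (j + 2))) ≤ σ U := by
        refine measure_mono (iUnion_subset fun j => hTU _ ?_)
        have hj2 : (1 : ℝ) < (j : ℝ) + 2 := by
          have : (0:ℝ) ≤ (j : ℝ) := Nat.cast_nonneg j
          linarith
        have hpos : 0 < (1 - c) / ((j : ℝ) + 2) := by
          apply div_pos (by linarith [hc.2]) (by linarith)
        have hlt : (1 - c) / ((j : ℝ) + 2) < 1 - c :=
          div_lt_self (by linarith [hc.2]) hj2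
        exact ⟨by linarith [hc.1], by linarith⟩
      rw [hsum] at hle
      simp_rw [hTeq] at hle
      rw [ENNReal.tsum_const_eq_top_of_ne_zero h0] at hle
      exact hUfin.ne (top_le_iff.1 hle)
    · have hempty : U ∩ {x | x i = c} = ∅ := by
        ext x
        simp only [mem_inter_iff, mem_setOf_eq, mem_empty_iff_false, iff_false]
        rintro ⟨hxU, hxc⟩
        rw [hU] at hxU
        exact hc (hxc ▸ hxU i trivial)
      simp [hempty]
  -- the rational grid
  set G : Set (Fin n → ℝ) := {x | ∃ i, ∃ q : ℚ, x i = (q : ℝ)} with hGdef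
  have hσG : σ (U ∩ G) = 0 := by
    have hsub : U ∩ G ⊆ ⋃ (i : Fin n) (q : ℚ), U ∩ {x | x i = (q : ℝ)} := by
      rintro x ⟨hxU, i, q, hq⟩
      exact mem_iUnion.2 ⟨i, mem_iUnion.2 ⟨q, hxU, hq⟩⟩
    exact measure_mono_null hsub
      (measure_iUnion_null fun i => measure_iUnion_null fun q => hslice i q)
  have hvslice : ∀ (i : Fin n) (c : ℝ), volume (U ∩ {x | x i = c}) = 0 := by
    intro i c
    apply measure_mono_null
      (?_ : _ ⊆ Set.univ.pi fun j => if j = i then {c} else (univ : Set ℝ))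
    · rw [volume_pi_pi]
      apply Finset.prod_eq_zero (Finset.mem_univ i)
      simp
    · rintro x ⟨hxU, hxc⟩ j _
      by_cases h : j = i
      · subst h; simpa using hxc
      · simp [h]
  have hvG : volume (U ∩ G) = 0 := by
    have hsub : U ∩ G ⊆ ⋃ (i : Fin n) (q : ℚ), U ∩ {x | x i = (q : ℝ)} := by
      rintro x ⟨hxU, i, q, hq⟩
      exact mem_iUnion.2 ⟨i, mem_iUnion.2 ⟨q, hxU, hq⟩⟩
    exact measure_mono_null hsub
      (measure_iUnion_null fun i => measure_iUnion_null fun q => hvslice i q)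
  -- dyadic boxes
  have hdsub : ∀ (m : ℕ) (k : Fin n → ℤ), (∀ i, 0 ≤ k i) → (∀ i, k i + 1 ≤ 2 ^ m) →
      dbox n m k ⊆ U := by
    intro m k h0 h1
    apply hsubU
    · intro i
      exact div_nonneg (by exact_mod_cast h0 i) (by positivity)
    · intro i
      rw [← add_div, div_le_one (by positivity)]
      have := h1 i
      push_cast
      exact_mod_cast this
  have hdval : ∀ (m : ℕ) (k : Fin n → ℤ), dbox n m k ⊆ U →
      σ (dbox n m k) = σ U * volume (dbox n m k) := by
    intro m k hkU
    have htr : ∀ k₁ k₂ : Fin n → ℤ, dbox n m k₁ ⊆ U → dbox n m k₂ ⊆ U →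
        σ (dbox n m k₂) = σ (dbox n m k₁) := by
      intro k₁ k₂ h h'
      have he : dbox n m k₂ =
          box n ((fun i => (k₁ i : ℝ) / 2 ^ m) + fun i => ((k₂ i : ℝ) - k₁ i) / 2 ^ m)
            ((fun i => (k₁ i : ℝ) / 2 ^ m + 1 / 2 ^ m) + fun i => ((k₂ i : ℝ) - k₁ i) / 2 ^ m) := by
        rw [dbox]
        have h1 : (fun i => (k₂ i : ℝ) / 2 ^ m) =
            (fun i => (k₁ i : ℝ) / 2 ^ m) + fun i => ((k₂ i : ℝ) - k₁ i) / 2 ^ m := by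
          funext i; simp only [Pi.add_apply]; ring
        have h2 : (fun i => (k₂ i : ℝ) / 2 ^ m + 1 / 2 ^ m) =
            (fun i => (k₁ i : ℝ) / 2 ^ m + 1 / 2 ^ m) +
              fun i => ((k₂ i : ℝ) - k₁ i) / 2 ^ m := by
          funext i; simp only [Pi.add_apply]; ring
        rw [h1, h2]
      rw [he]
      exact htrans _ _ _ h (he ▸ h')
    have hbase : dbox n m 0 ⊆ U := by
      refine hdsub m 0 (fun _ => le_refl 0) (fun i => ?_)
      have := pow_pos (show (0:ℤ) < 2 by norm_num) m
      simp only [Pi.zero_apply]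
      omega
    set c := σ (dbox n m (0 : Fin n → ℤ)) with hc
    set V := (ENNReal.ofReal (1 / 2 ^ m)) ^ n with hV
    have hjU : ∀ j : Fin n → Fin (2 ^ m), dbox n m (fun i => ((j i : ℕ) : ℤ)) ⊆ U := by
      intro j
      refine hdsub m _ (fun i => Int.ofNat_nonneg _) (fun i => ?_)
      have h1 := (j i).isLt
      have hcast : ((2 ^ m : ℕ) : ℤ) = 2 ^ m := by push_cast; rfl
      omega
    set W := ⋃ j : Fin n → Fin (2 ^ m), dbox n m (fun i => ((j i : ℕ) : ℤ)) with hW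
    have hWU : W ⊆ U := iUnion_subset hjU
    have hUW : U \ W ⊆ U ∩ G := by
      intro x hx
      refine ⟨hx.1, ?_⟩
      by_contra hxG
      apply hx.2
      have hxG' : ∀ (i : Fin n) (q : ℚ), x i ≠ (q : ℝ) := by
        intro i q hq
        exact hxG ⟨i, q, hq⟩
      have hx0 : ∀ i, (0:ℝ) < x i ∧ x i < 1 := by
        intro i
        have := hx.1
        rw [hU] at this
        exact this i trivial
      have hfl0 : ∀ i, 0 ≤ ⌊x i * 2 ^ m⌋ := by
        intro i
        apply Int.floor_nonneg.2
        have := (hx0 i).1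
        positivity
      have hflt : ∀ i, ⌊x i * 2 ^ m⌋ < 2 ^ m := by
        intro i
        apply Int.floor_lt.2
        push_cast
        have h2 : (0:ℝ) < 2 ^ m := by positivity
        nlinarith [(hx0 i).2]
      refine mem_iUnion.2 ⟨fun i => ⟨(⌊x i * 2 ^ m⌋).toNat, ?_⟩, ?_⟩
      · have h1 := hfl0 i
        have h2 := hflt i
        have hcast : ((2 ^ m : ℕ) : ℤ) = 2 ^ m := by push_cast; rfl
        omega
      · rw [mem_dbox]
        intro i
        dsimp only
        simp only [Fin.val_mk, Int.toNat_of_nonneg (hfl0 i)]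
        exact aux_mem m (hxG' i)
    have hσW : σ U = σ W := by
      refine le_antisymm ?_ (measure_mono hWU)
      calc σ U ≤ σ (W ∪ (U \ W)) := measure_mono (fun x hx => by
            by_cases h : x ∈ W
            · exact Or.inl h
            · exact Or.inr ⟨hx, h⟩)
        _ ≤ σ W + σ (U \ W) := measure_union_le _ _
        _ = σ W := by rw [measure_mono_null hUW hσG, add_zero]
    have hvW : volume U = volume W := by
      refine le_antisymm ?_ (measure_mono hWU)
      calc volume U ≤ volume (W ∪ (U \ W)) := measure_mono (fun x hx => by
            by_cases h : x ∈ W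
            · exact Or.inl h
            · exact Or.inr ⟨hx, h⟩)
        _ ≤ volume W + volume (U \ W) := measure_union_le _ _
        _ = volume W := by rw [measure_mono_null hUW hvG, add_zero]
    have hpair : Pairwise (Function.onFun Disjoint
        (fun j : Fin n → Fin (2 ^ m) => dbox n m (fun i => ((j i : ℕ) : ℤ)))) := by
      intro j j' hjj'
      refine dbox_disjoint (fun h => hjj' ?_)
      funext i
      have := congrFun h i
      exact Fin.ext (by exact_mod_cast this)
    set N : ℕ := (2 ^ m) ^ n with hN
    have hcard : Fintype.card (Fin n → Fin (2 ^ m)) = N := by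
      rw [Fintype.card_fun, Fintype.card_fin, Fintype.card_fin]
    have hNc : (N : ENNReal) * c = σ U := by
      rw [hσW, hW, measure_iUnion (μ := σ) hpair (fun j => measurableSet_dbox _ _), tsum_fintype]
      have : ∀ j : Fin n → Fin (2 ^ m), σ (dbox n m (fun i => ((j i : ℕ) : ℤ))) = c :=
        fun j => htr 0 _ hbase (hjU j)
      rw [Finset.sum_congr rfl fun j _ => this j, Finset.sum_const, nsmul_eq_mul,
        Finset.card_univ, hcard]
    have hNV : (N : ENNReal) * V = 1 := by
      rw [← hvolU, hvW, hW, measure_iUnion (μ := volume) hpair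
        (fun j => measurableSet_dbox _ _), tsum_fintype]
      rw [Finset.sum_congr rfl fun j _ => volume_dbox m _, Finset.sum_const, nsmul_eq_mul,
        Finset.card_univ, hcard, hV]
    calc σ (dbox n m k) = c := htr 0 k hbase hkU
      _ = c * ((N : ENNReal) * V) := by rw [hNV, mul_one]
      _ = ((N : ENNReal) * c) * V := by ring
      _ = σ U * V := by rw [hNc]
      _ = σ U * volume (dbox n m k) := by rw [volume_dbox, hV]
  -- value on general open boxes
  have hboxval : ∀ a b : Fin n → ℝ, box n a b ⊆ U →
      σ (box n a b) = σ U * volume (box n a b) := by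
    intro a b hB
    set B := box n a b with hBdef
    set S : ℕ → (Fin n → ℤ) → Set (Fin n → ℝ) :=
      fun m k => if dbox n m k ⊆ B then dbox n m k else ∅ with hSdef
    set E : ℕ → Set (Fin n → ℝ) := fun m => ⋃ k : Fin n → ℤ, S m k with hEdef
    have hSsubd : ∀ m k, S m k ⊆ dbox n m k := by
      intro m k
      rw [hSdef]; dsimp only; split_ifs with h
      · exact Subset.rfl
      · exact empty_subset _
    have hSsub : ∀ m k, S m k ⊆ B := by
      intro m k
      rw [hSdef]; dsimp only; split_ifs with h
      · exact h
      · exact empty_subset _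
    have hSm : ∀ m k, MeasurableSet (S m k) := by
      intro m k
      rw [hSdef]; dsimp only; split_ifs with h
      · exact measurableSet_dbox m k
      · exact MeasurableSet.empty
    have hSd : ∀ m, Pairwise (Function.onFun Disjoint (S m)) :=
      fun m k k' h => ((dbox_disjoint h).mono (hSsubd m k) (hSsubd m k'))
    have hSv : ∀ m k, σ (S m k) = σ U * volume (S m k) := by
      intro m k
      rw [hSdef]; dsimp only; split_ifs with h
      · exact hdval m k (h.trans hB)
      · simp
    have hEsub : ∀ m, E m ⊆ B := fun m => iUnion_subset (hSsub m)
    have hEv : ∀ m, σ (E m) = σ U * volume (E m) := by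
      intro m
      rw [hEdef]
      dsimp only
      rw [measure_iUnion (μ := σ) (hSd m) (hSm m),
        measure_iUnion (μ := volume) (hSd m) (hSm m), ← ENNReal.tsum_mul_left]
      exact tsum_congr fun k => hSv m k
    have hmono : ∀ m, E m \ G ⊆ E (m + 1) \ G := by
      intro m x hx
      refine ⟨?_, hx.2⟩
      obtain ⟨k, hxS⟩ := mem_iUnion.1 hx.1
      have hxd : x ∈ dbox n m k ∧ dbox n m k ⊆ B := by
        rw [hSdef] at hxS; dsimp only at hxS
        split_ifs at hxS with h
        · exact ⟨hxS, h⟩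
        · exact absurd hxS (notMem_empty x)
      have hxG : ∀ (i : Fin n) (q : ℚ), x i ≠ (q : ℝ) := by
        intro i q hq
        exact hx.2 ⟨i, q, hq⟩
      have hxd' : x ∈ dbox n (m + 1) (fun i => ⌊x i * 2 ^ (m + 1)⌋) :=
        mem_dbox.2 fun i => aux_mem (m + 1) (hxG i)
      have hsub' : dbox n (m + 1) (fun i => ⌊x i * 2 ^ (m + 1)⌋) ⊆ dbox n m k := by
        intro y hy
        rw [mem_dbox] at hy ⊢
        intro i
        have h1 := mem_dbox.1 hxd.1 i
        have h2 := aux_nested m h1.1 h1.2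
        exact ⟨by linarith [(hy i).1, h2.1], by linarith [(hy i).2, h2.2]⟩
      refine mem_iUnion.2 ⟨fun i => ⌊x i * 2 ^ (m + 1)⌋, ?_⟩
      rw [hSdef]; dsimp only
      rw [if_pos (hsub'.trans hxd.2)]
      exact hxd'
    have hcup : ⋃ m, (E m \ G) = B \ G := by
      apply Subset.antisymm
      · exact iUnion_subset fun m => diff_subset_diff_left (hEsub m)
      · rintro x ⟨hxB, hxG⟩
        have hxG' : ∀ (i : Fin n) (q : ℚ), x i ≠ (q : ℝ) := fun i q hq => hxG ⟨i, q, hq⟩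
        have hxi : ∀ i, a i < x i ∧ x i < b i := fun i => mem_box.1 hxB i
        have hex : ∀ i : Fin n, ∃ mi : ℕ,
            (1:ℝ) / 2 ^ mi < x i - a i ∧ (1:ℝ) / 2 ^ mi < b i - x i := by
          intro i
          obtain ⟨mi, hmi⟩ := exists_pow_lt_of_lt_one
            (show (0:ℝ) < min (x i - a i) (b i - x i) by
              rcases hxi i with ⟨h1, h2⟩
              exact lt_min (by linarith) (by linarith))
            (show (1:ℝ)/2 < 1 by norm_num)
          rw [div_pow, one_pow, lt_min_iff] at hmi
          exact ⟨mi, hmi.1, hmi.2⟩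
        choose mf hmf1 hmf2 using hex
        set m := Finset.univ.sup mf with hm
        have hmon : ∀ i, (1:ℝ) / 2 ^ m ≤ 1 / 2 ^ (mf i) := by
          intro i
          apply one_div_le_one_div_of_le (by positivity)
          exact pow_le_pow_right₀ (by norm_num) (Finset.le_sup (Finset.mem_univ i))
        refine mem_iUnion.2 ⟨m, ?_, hxG⟩
        have hxd : x ∈ dbox n m (fun i => ⌊x i * 2 ^ m⌋) :=
          mem_dbox.2 fun i => aux_mem m (hxG' i)
        have hsubB : dbox n m (fun i => ⌊x i * 2 ^ m⌋) ⊆ B := by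
          intro y hy
          rw [hBdef]
          refine mem_box.2 fun i => ?_
          have h := aux_small (lt_of_le_of_lt (hmon i) (hmf1 i))
            (lt_of_le_of_lt (hmon i) (hmf2 i))
          have hyi := mem_dbox.1 hy i
          exact ⟨by linarith [h.1, hyi.1], by linarith [h.2, hyi.2]⟩
        refine mem_iUnion.2 ⟨fun i => ⌊x i * 2 ^ m⌋, ?_⟩
        rw [hSdef]; dsimp only
        rw [if_pos hsubB]
        exact hxd
    have hdir : Directed (· ⊆ ·) (fun m => E m \ G) :=
      (monotone_nat_of_le_succ hmono).directed_le
    have hBG : B ∩ G ⊆ U ∩ G := fun x hx => ⟨hB hx.1, hx.2⟩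
    have hEG : ∀ m, E m ∩ G ⊆ U ∩ G := fun m x hx => ⟨hB (hEsub m hx.1), hx.2⟩
    have hσB : σ B = ⨆ m, σ (E m) := by
      rw [← measure_diff_null' (measure_mono_null hBG hσG), ← hcup, hdir.measure_iUnion]
      exact iSup_congr fun m => measure_diff_null' (measure_mono_null (hEG m) hσG)
    have hvB : volume B = ⨆ m, volume (E m) := by
      rw [← measure_diff_null' (measure_mono_null hBG hvG), ← hcup, hdir.measure_iUnion]
      exact iSup_congr fun m => measure_diff_null' (measure_mono_null (hEG m) hvG)
    rw [hσB, hvB, ENNReal.mul_iSup]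
    exact iSup_congr hEv
  -- conclusion via π-system uniqueness
  have hμfin : IsFiniteMeasure (σ.restrict U) :=
    ⟨by rwa [Measure.restrict_apply_univ]⟩
  have hext : σ.restrict U = (σ U) • volume.restrict U := by
    refine ext_of_generate_finite
      (Set.pi univ '' Set.pi univ fun _ : Fin n =>
        (⋃ (p : ℚ) (q : ℚ) (_ : p < q), {Ioo (p : ℝ) (q : ℝ)}))
      ?_ (IsPiSystem.pi fun _ => Real.isPiSystem_Ioo_rat) ?_ ?_
    · exact (generateFrom_eq_pi
        (fun _ => (BorelSpace.measurable_eq.trans Real.borel_eq_generateFrom_Ioo_rat).symm)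
        (fun _ => (Real.finiteSpanningSetsInIooRat volume).isCountablySpanning)).symm
    · rintro _ ⟨s, hs, rfl⟩
      simp only [Set.mem_pi, mem_univ, forall_true_left, mem_iUnion, mem_singleton_iff] at hs
      choose p q hpq hseq using hs
      have hsrw : s = fun i => Ioo ((p i : ℝ)) ((q i : ℝ)) := funext fun i => hseq i
      subst hsrw
      have hBmeas : MeasurableSet (Set.univ.pi fun i => Ioo ((p i : ℝ)) ((q i : ℝ))) :=
        MeasurableSet.univ_pi fun _ => measurableSet_Ioo
      rw [Measure.restrict_apply hBmeas, Measure.smul_apply,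
        Measure.restrict_apply hBmeas, smul_eq_mul]
      have hinter : (Set.univ.pi fun i => Ioo ((p i : ℝ)) ((q i : ℝ))) ∩ U =
          box n (fun i => max (p i : ℝ) 0) (fun i => min (q i : ℝ) 1) := by
        rw [hU, box, ← Set.pi_inter_distrib]
        exact congrArg _ (funext fun i => Set.Ioo_inter_Ioo)
      rw [hinter]
      exact hboxval _ _ (hsubU _ _ (fun i => le_max_right _ _) (fun i => min_le_right _ _))
    · rw [Measure.restrict_apply_univ, Measure.smul_apply,
        Measure.restrict_apply_univ, smul_eq_mul, hvolU, mul_one]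
  refine ⟨(σ U).toNNReal, fun A hAU hA => ?_⟩
  have h1 : σ A = σ.restrict U A := by
    rw [Measure.restrict_apply hA, inter_eq_self_of_subset_left hAU]
  rw [h1, hext, Measure.smul_apply, Measure.restrict_apply hA,
    inter_eq_self_of_subset_left hAU, smul_eq_mul, ENNReal.coe_toNNReal hUfin.ne]
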